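/- For natural numbers n and j and complex number a such that (2a-j)_k ≠ 0 for 0 ≤ k ≤ 2n+1, ∑_{k=0}^{2n+1} (-2n-1)_k (a)_k 2^k / ((2a-j)_k k!) = -(2^{2n} (3/2)_n / (2a-j)_{2n+1}) · ∑_{r=0}^{min(⌊j/2⌋,n)} (-1)^r C(j,2r+1) (-n)_r (a)_{n-r}. -/
import Mathlib


open Finset

/-- The Pochhammer symbol (rising factorial) `(x)_k = x (x+1) ⋯ (x+k-1)`. -/
noncomputable def poch (x : ℂ) (k : ℕ) : ℂ := (ascPochhammer ℂ k).eval x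

lemma poch_zero (x : ℂ) : poch x 0 = 1 := by simp [poch]

lemma poch_succ (x : ℂ) (k : ℕ) : poch x (k + 1) = poch x k * (x + k) := by
  simpa [poch] using ascPochhammer_succ_eval (S := ℂ) k x

lemma poch_succ_left (x : ℂ) (k : ℕ) : poch x (k + 1) = x * poch (x + 1) k := by
  simp [poch, ascPochhammer_succ_left, Polynomial.eval_comp]

lemma poch_add (x : ℂ) (m k : ℕ) : poch x (m + k) = poch x m * poch (x + m) k := by
  have := congrArg (Polynomial.eval x) (ascPochhammer_mul (S := ℂ) m k)
  simp only [Polynomial.eval_mul, Polynomial.eval_comp, Polynomial.eval_add,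
    Polynomial.eval_X, Polynomial.eval_natCast] at this
  simpa [poch] using this.symm

/-- Cast of the descending factorial step, valid for all `k`. -/
lemma dF_succ (N k : ℕ) :
    (N.descFactorial (k + 1) : ℂ) = (N.descFactorial k : ℂ) * ((N : ℂ) - k) := by
  rcases le_or_gt k N with hle | hlt
  · rw [Nat.descFactorial_succ]
    push_cast [hle]
    ring
  · rw [Nat.descFactorial_eq_zero_iff_lt.2 (Nat.lt_succ_of_lt hlt),
      Nat.descFactorial_eq_zero_iff_lt.2 hlt]
    simp

lemma poch_neg_nat (N k : ℕ) :
    poch (-(N : ℂ)) k = (-1) ^ k * (N.descFactorial k : ℂ) := by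
  induction k with
  | zero => simp [poch_zero]
  | succ k ih =>
    rw [poch_succ, ih, dF_succ]
    ring

/-- Descending factorial addition identity. -/
lemma dF_next (n r : ℕ) :
    ((n + 1).descFactorial r : ℂ)
      = (n.descFactorial r : ℂ) + r * (n.descFactorial (r - 1) : ℂ) := by
  cases r with
  | zero => simp
  | succ s =>
    have h : (n + 1).descFactorial (s + 1) = (n + 1) * n.descFactorial s :=
      Nat.succ_descFactorial_succ n s
    rw [h, Nat.add_sub_cancel]
    push_cast
    rw [dF_succ]
    ring

/-- Absorption identity for binomial coefficients, cast to `ℂ`. -/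
lemma chooseC (j m : ℕ) :
    ((j : ℂ) - m) * (j.choose m : ℂ) = ((m : ℂ) + 1) * (j.choose (m + 1) : ℂ) := by
  rcases le_or_gt m j with hle | hlt
  · have h := Nat.choose_succ_right_eq j m
    have h' := congrArg (Nat.cast : ℕ → ℂ) h
    push_cast [Nat.cast_sub hle] at h'
    linear_combination -h'
  · rw [Nat.choose_eq_zero_of_lt hlt, Nat.choose_eq_zero_of_lt (Nat.lt_succ_of_lt hlt)]
    simp

/-- The polynomial-normalized hypergeometric sum
`(2a-j)_N · ₂F₁(-N, a; 2a-j; 2)`. -/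
noncomputable def G (N : ℕ) (a : ℂ) (j : ℕ) : ℂ :=
  ∑ k ∈ range (N + 1),
    (-2 : ℂ) ^ k * (N.choose k : ℂ) * poch a k * poch (2 * a - j + k) (N - k)

/-- Closed form for even `N = 2n`. -/
noncomputable def Ee (n : ℕ) (a : ℂ) (j : ℕ) : ℂ :=
  2 ^ (2 * n) * poch (1 / 2) n *
    ∑ r ∈ range (n + 1),
      (j.choose (2 * r) : ℂ) * (n.descFactorial r : ℂ) * poch a (n - r)

/-- Closed form for odd `N = 2n+1`. -/
noncomputable def Oo (n : ℕ) (a : ℂ) (j : ℕ) : ℂ :=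
  -(2 ^ (2 * n) * poch (3 / 2) n *
    ∑ r ∈ range (n + 1),
      (j.choose (2 * r + 1) : ℂ) * (n.descFactorial r : ℂ) * poch a (n - r))

lemma poch_three_halves (n : ℕ) :
    poch (3 / 2) n = (2 * (n : ℂ) + 1) * poch (1 / 2) n := by
  induction n with
  | zero => simp [poch_zero]
  | succ n ih =>
    rw [poch_succ, ih, poch_succ]
    push_cast
    ring

/-- The basic contiguous recurrence for `G`. -/
lemma Grec (N : ℕ) (a : ℂ) (j : ℕ) :
    G (N + 1) a j = (2 * a - j + N) * G N a j - 2 * a * G N (a + 1) (j + 1) := by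
  have hG1 : (2 * a - j + N) * G N a j
      = ∑ k ∈ range (N + 1),
          (-2 : ℂ) ^ k * (N.choose k : ℂ) * poch a k * poch (2 * a - j + k) (N + 1 - k) := by
    rw [G, Finset.mul_sum]
    refine Finset.sum_congr rfl fun k hk => ?_
    have hk' : k ≤ N := by simpa [Nat.lt_succ_iff] using hk
    have h1 : N + 1 - k = (N - k) + 1 := by omega
    rw [h1, poch_succ]
    have h2 : 2 * a - j + k + ((N - k : ℕ) : ℂ) = 2 * a - j + N := by
      push_cast [Nat.cast_sub hk']
      ring
    rw [h2]
    ring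
  have hG2 : -(2 * a) * G N (a + 1) (j + 1)
      = ∑ k ∈ range (N + 1),
          (-2 : ℂ) ^ (k + 1) * (N.choose k : ℂ) * poch a (k + 1)
            * poch (2 * a - j + (k + 1)) (N - k) := by
    rw [G, Finset.mul_sum]
    refine Finset.sum_congr rfl fun k hk => ?_
    have h2 : 2 * (a + 1) - ((j + 1 : ℕ) : ℂ) + k = 2 * a - j + (k + 1) := by
      push_cast
      ring
    rw [h2, poch_succ_left a k, pow_succ]
    ring
  rw [G, Finset.sum_range_succ']
  rw [show (2 * a - j + N) * G N a j - 2 * a * G N (a + 1) (j + 1)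
      = (2 * a - j + N) * G N a j + (-(2 * a) * G N (a + 1) (j + 1)) by ring, hG1, hG2]
  rw [Finset.sum_range_succ' (fun k => (-2 : ℂ) ^ k * (N.choose k : ℂ) * poch a k
      * poch (2 * a - j + k) (N + 1 - k)) N]
  have hA : ∑ k ∈ range (N + 1),
      (-2 : ℂ) ^ (k + 1) * ((N + 1).choose (k + 1) : ℂ) * poch a (k + 1)
        * poch (2 * a - j + ((k + 1 : ℕ) : ℂ)) (N + 1 - (k + 1))
      = ∑ k ∈ range (N + 1),
          ((-2 : ℂ) ^ (k + 1) * (N.choose (k + 1) : ℂ) * poch a (k + 1)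
            * poch (2 * a - j + (k + 1)) (N - k)
          + (-2 : ℂ) ^ (k + 1) * (N.choose k : ℂ) * poch a (k + 1)
            * poch (2 * a - j + (k + 1)) (N - k)) := by
    refine Finset.sum_congr rfl fun k hk => ?_
    have h1 : N + 1 - (k + 1) = N - k := by omega
    rw [h1, Nat.choose_succ_succ]
    push_cast
    ring
  rw [hA, Finset.sum_add_distrib]
  have hB : ∑ k ∈ range (N + 1),
      (-2 : ℂ) ^ (k + 1) * (N.choose (k + 1) : ℂ) * poch a (k + 1)
        * poch (2 * a - j + (k + 1)) (N - k)
      = ∑ k ∈ range N,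
          (-2 : ℂ) ^ (k + 1) * (N.choose (k + 1) : ℂ) * poch a (k + 1)
            * poch (2 * a - j + ((k + 1 : ℕ) : ℂ)) (N + 1 - (k + 1)) := by
    rw [Finset.sum_range_succ]
    have : (N.choose (N + 1) : ℂ) = 0 := by
      simp [Nat.choose_eq_zero_of_lt]
    rw [this]
    simp only [mul_zero, zero_mul, mul_assoc]
    rw [add_zero]
    refine Finset.sum_congr rfl fun k hk => ?_
    have h1 : N + 1 - (k + 1) = N - k := by omega
    push_cast [h1]
    ring
  rw [hB]
  simp only [Nat.choose_zero_right]
  push_cast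
  ring

/-- Recurrence (A): from even closed form to odd closed form. -/
lemma recA (n : ℕ) (a : ℂ) (j : ℕ) :
    (2 * a - j + 2 * n) * Ee n a j - 2 * a * Ee n (a + 1) (j + 1) = Oo n a j := by
  have key : ∑ r ∈ range (n + 1), ((2 * a - j + 2 * n) *
        ((j.choose (2 * r) : ℂ) * (n.descFactorial r : ℂ) * poch a (n - r))
      - 2 * a *
        (((j + 1).choose (2 * r) : ℂ) * (n.descFactorial r : ℂ) * poch (a + 1) (n - r)))
      = -((2 * (n : ℂ) + 1) *
          ∑ r ∈ range (n + 1),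
            (j.choose (2 * r + 1) : ℂ) * (n.descFactorial r : ℂ) * poch a (n - r)) := by
    have h1 : ∀ r ∈ range (n + 1),
        (2 * a - j + 2 * n) * ((j.choose (2 * r) : ℂ) * (n.descFactorial r : ℂ) * poch a (n - r))
        - 2 * a * (((j + 1).choose (2 * r) : ℂ) * (n.descFactorial r : ℂ) * poch (a + 1) (n - r))
        = 2 * ((j.choose (2 * r) : ℂ) - (((j + 1).choose (2 * r) : ℂ))) * (n.descFactorial r : ℂ) *
            poch a (n + 1 - r)
          + (2 * (r : ℂ) - j) * (j.choose (2 * r) : ℂ) * (n.descFactorial r : ℂ) *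
            poch a (n - r) := by
      intro r hr
      have hr' : r ≤ n := by simpa [Nat.lt_succ_iff] using hr
      have e1 : n + 1 - r = (n - r) + 1 := by omega
      have ha : poch a (n + 1 - r) = poch a (n - r) * (a + ((n : ℂ) - r)) := by
        rw [e1, poch_succ, Nat.cast_sub hr']
      have hb : poch a (n + 1 - r) = a * poch (a + 1) (n - r) := by
        rw [e1, poch_succ_left]
      linear_combination (-2 * (j.choose (2 * r) : ℂ) * (n.descFactorial r : ℂ)) * ha
        + (2 * ((j + 1).choose (2 * r) : ℂ) * (n.descFactorial r : ℂ)) * hb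
    rw [Finset.sum_congr rfl h1, Finset.sum_add_distrib]
    have h4 : ∑ r ∈ range (n + 1),
        2 * ((j.choose (2 * r) : ℂ) - (((j + 1).choose (2 * r) : ℂ))) * (n.descFactorial r : ℂ) *
          poch a (n + 1 - r)
        = ∑ r ∈ range (n + 1),
            (-2) * (j.choose (2 * r + 1) : ℂ) * ((n.descFactorial r : ℂ) * ((n : ℂ) - r)) *
              poch a (n - r) := by
      rw [Finset.sum_range_succ' _ n, Finset.sum_range_succ]
      have hz1 : 2 * ((j.choose (2 * 0) : ℂ) - (((j + 1).choose (2 * 0) : ℂ)))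
          * ((n.descFactorial 0 : ℂ)) * poch a (n + 1 - 0) = 0 := by
        norm_num
      have hz2 : (-2) * (j.choose (2 * n + 1) : ℂ) *
          ((n.descFactorial n : ℂ) * ((n : ℂ) - n)) * poch a (n - n) = 0 := by
        simp
      rw [hz1, hz2, add_zero, add_zero]
      refine Finset.sum_congr rfl fun r hr => ?_
      have e1 : n + 1 - (r + 1) = n - r := by omega
      have e2 : 2 * (r + 1) = 2 * r + 1 + 1 := by ring
      rw [e1, e2, Nat.choose_succ_succ j (2 * r + 1), dF_succ]
      push_cast
      ring
    rw [h4, ← Finset.sum_add_distrib, Finset.mul_sum, ← Finset.sum_neg_distrib]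
    refine Finset.sum_congr rfl fun r hr => ?_
    have hc := chooseC j (2 * r)
    push_cast at hc ⊢
    linear_combination (-((n.descFactorial r : ℂ) * poch a (n - r))) * hc
  rw [Ee, Ee, Oo, poch_three_halves]
  rw [Finset.sum_sub_distrib] at key
  simp only [← Finset.mul_sum] at key
  push_cast at key ⊢
  linear_combination (2 ^ (2 * n) * poch (1 / 2) n) * key

/-- Recurrence (B): from odd closed form to the next even closed form. -/
lemma recB (n : ℕ) (a : ℂ) (j : ℕ) :
    (2 * a - j + (2 * n + 1)) * Oo n a j - 2 * a * Oo n (a + 1) (j + 1) = Ee (n + 1) a j := by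
  have key : ∑ r ∈ range (n + 1), ((2 * a - j + (2 * (n : ℂ) + 1)) *
        ((j.choose (2 * r + 1) : ℂ) * (n.descFactorial r : ℂ) * poch a (n - r))
      - 2 * a *
        (((j + 1).choose (2 * r + 1) : ℂ) * (n.descFactorial r : ℂ) * poch (a + 1) (n - r)))
      = (-2) * ∑ r ∈ range (n + 1 + 1),
          (j.choose (2 * r) : ℂ) * ((n + 1).descFactorial r : ℂ) * poch a (n + 1 - r) := by
    have h1 : ∀ r ∈ range (n + 1),
        (2 * a - j + (2 * (n : ℂ) + 1)) *
          ((j.choose (2 * r + 1) : ℂ) * (n.descFactorial r : ℂ) * poch a (n - r))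
        - 2 * a * (((j + 1).choose (2 * r + 1) : ℂ) * (n.descFactorial r : ℂ) *
            poch (a + 1) (n - r))
        = (-2) * (j.choose (2 * r) : ℂ) * (n.descFactorial r : ℂ) * poch a (n + 1 - r)
          + (-(2 * (r : ℂ) + 2)) * (j.choose (2 * r + 2) : ℂ) * (n.descFactorial r : ℂ) *
              poch a (n - r) := by
      intro r hr
      have hr' : r ≤ n := by simpa [Nat.lt_succ_iff] using hr
      have e1 : n + 1 - r = (n - r) + 1 := by omega
      have ha : poch a (n + 1 - r) = poch a (n - r) * (a + ((n : ℂ) - r)) := by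
        rw [e1, poch_succ, Nat.cast_sub hr']
      have hb : poch a (n + 1 - r) = a * poch (a + 1) (n - r) := by
        rw [e1, poch_succ_left]
      have hp : ((j + 1).choose (2 * r + 1) : ℂ)
          = (j.choose (2 * r) : ℂ) + (j.choose (2 * r + 1) : ℂ) := by
        rw [Nat.choose_succ_succ j (2 * r)]
        push_cast
        ring
      have hc := chooseC j (2 * r + 1)
      push_cast at hc
      linear_combination (-2 * (j.choose (2 * r + 1) : ℂ) * (n.descFactorial r : ℂ)) * ha
        + (2 * ((j + 1).choose (2 * r + 1) : ℂ) * (n.descFactorial r : ℂ)) * hb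
        + (-2 * (n.descFactorial r : ℂ) * poch a (n + 1 - r)) * hp
        + (-((n.descFactorial r : ℂ) * poch a (n - r))) * hc
    rw [Finset.sum_congr rfl h1, Finset.sum_add_distrib,
      Finset.sum_range_succ' (fun r =>
        (j.choose (2 * r) : ℂ) * ((n + 1).descFactorial r : ℂ) * poch a (n + 1 - r)) (n + 1),
      Finset.sum_range_succ' (fun r =>
        (-2) * (j.choose (2 * r) : ℂ) * (n.descFactorial r : ℂ) * poch a (n + 1 - r)) n]
    have hext : ∑ r ∈ range n,
        (-2) * (j.choose (2 * (r + 1)) : ℂ) * (n.descFactorial (r + 1) : ℂ) *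
          poch a (n + 1 - (r + 1))
        = ∑ r ∈ range (n + 1),
            (-2) * (j.choose (2 * (r + 1)) : ℂ) * (n.descFactorial (r + 1) : ℂ) *
              poch a (n + 1 - (r + 1)) := by
      rw [Finset.sum_range_succ]
      simp [Nat.descFactorial_eq_zero_iff_lt]
    rw [hext, mul_add, Finset.mul_sum]
    have hterm : ∀ r ∈ range (n + 1),
        (-2) * (j.choose (2 * (r + 1)) : ℂ) * (n.descFactorial (r + 1) : ℂ) *
            poch a (n + 1 - (r + 1))
          + (-(2 * (r : ℂ) + 2)) * (j.choose (2 * r + 2) : ℂ) * (n.descFactorial r : ℂ) *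
            poch a (n - r)
        = (-2) * ((j.choose (2 * (r + 1)) : ℂ) * (((n + 1).descFactorial (r + 1)) : ℂ) *
            poch a (n + 1 - (r + 1))) := by
      intro r hr
      have e1 : n + 1 - (r + 1) = n - r := by omega
      have e2 : 2 * (r + 1) = 2 * r + 2 := by ring
      have hd := dF_next n (r + 1)
      rw [Nat.add_sub_cancel] at hd
      rw [e1, e2, hd]
      push_cast
      ring
    have hsum : ∑ r ∈ range (n + 1),
        (-2) * (j.choose (2 * (r + 1)) : ℂ) * (n.descFactorial (r + 1) : ℂ) *
          poch a (n + 1 - (r + 1))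
        + ∑ r ∈ range (n + 1),
            (-(2 * (r : ℂ) + 2)) * (j.choose (2 * r + 2) : ℂ) * (n.descFactorial r : ℂ) *
              poch a (n - r)
        = ∑ r ∈ range (n + 1),
            (-2) * ((j.choose (2 * (r + 1)) : ℂ) * (((n + 1).descFactorial (r + 1)) : ℂ) *
              poch a (n + 1 - (r + 1))) := by
      rw [← Finset.sum_add_distrib]
      exact Finset.sum_congr rfl hterm
    simp only [Nat.choose_zero_right, Nat.descFactorial_zero, Nat.cast_one, mul_zero,
      Nat.mul_zero]
    linear_combination hsum
  rw [Oo, Oo, Ee, poch_three_halves, poch_succ (1 / 2 : ℂ) n]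
  rw [Finset.sum_sub_distrib] at key
  simp only [← Finset.mul_sum] at key
  push_cast at key ⊢
  linear_combination (-(2 ^ (2 * n) * (2 * (n : ℂ) + 1) * poch (1 / 2) n)) * key

lemma step_even (n : ℕ) (ho : ∀ (a : ℂ) (j : ℕ), G (2 * n + 1) a j = Oo n a j) :
    ∀ (a : ℂ) (j : ℕ), G (2 * n + 2) a j = Ee (n + 1) a j := by
  intro a j
  have hg := Grec (2 * n + 1) a j
  rw [show 2 * n + 2 = 2 * n + 1 + 1 from rfl, hg, ho a j, ho (a + 1) (j + 1)]
  have hcast : ((2 * n + 1 : ℕ) : ℂ) = 2 * (n : ℂ) + 1 := by push_cast; ring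
  rw [hcast]
  exact recB n a j

lemma Gval (n : ℕ) : ∀ (a : ℂ) (j : ℕ), G (2 * n) a j = Ee n a j ∧ G (2 * n + 1) a j = Oo n a j := by
  induction n with
  | zero =>
    intro a j
    constructor
    · simp [G, Ee, poch_zero]
    · have hg := Grec 0 a j
      have h0 : ∀ (a : ℂ) (j : ℕ), G 0 a j = 1 := by
        intro a j; simp [G, poch_zero]
      rw [show 2 * 0 + 1 = 0 + 1 from rfl, hg, h0, h0]
      simp [Oo, poch_zero, Nat.choose_one_right]
  | succ n ih =>
    intro a j
    have he := step_even n (fun a j => (ih a j).2)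
    have h1 : G (2 * (n + 1)) a j = Ee (n + 1) a j := by
      rw [show 2 * (n + 1) = 2 * n + 2 by ring]; exact he a j
    refine ⟨h1, ?_⟩
    have hg := Grec (2 * (n + 1)) a j
    rw [hg, show 2 * (n + 1) = 2 * n + 2 by ring, he a j, he (a + 1) (j + 1)]
    have := recA (n + 1) a j
    push_cast at this ⊢
    linear_combination this

theorem twoF1_neg2np1_a_twoAmj (n j : ℕ) (a : ℂ)
    (h : ∀ k ≤ 2 * n + 1, poch (2 * a - j) k ≠ 0) :
    ∑ k ∈ range (2 * n + 2),
        poch (-(2 * n : ℂ) - 1) k * poch a k * 2 ^ k /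
          (poch (2 * a - j) k * (k.factorial : ℂ))
      = -((2 : ℂ) ^ (2 * n) * poch (3 / 2) n / poch (2 * a - j) (2 * n + 1) *
          ∑ r ∈ range (min (j / 2) n + 1),
            (-1 : ℂ) ^ r * (j.choose (2 * r + 1) : ℂ) * poch (-(n : ℂ)) r *
              poch a (n - r)) := by
  have hden := h (2 * n + 1) le_rfl
  have hL : ∑ k ∈ range (2 * n + 2),
        poch (-(2 * n : ℂ) - 1) k * poch a k * 2 ^ k /
          (poch (2 * a - j) k * (k.factorial : ℂ))
      = G (2 * n + 1) a j / poch (2 * a - j) (2 * n + 1) := by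
    rw [eq_div_iff hden, Finset.sum_mul, G]
    refine Finset.sum_congr (by rw [show 2 * n + 1 + 1 = 2 * n + 2 by omega]) fun k hk => ?_
    have hk' : k ≤ 2 * n + 1 := by
      have := Finset.mem_range.mp hk
      omega
    have hpk := h k hk'
    have hfac : (k.factorial : ℂ) ≠ 0 := by exact_mod_cast k.factorial_ne_zero
    have hneg : poch (-(2 * n : ℂ) - 1) k = (-1) ^ k * (((2 * n + 1).descFactorial k : ℕ) : ℂ) := by
      have e : (-(2 * n : ℂ) - 1) = -(((2 * n + 1 : ℕ)) : ℂ) := by push_cast; ring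
      rw [e, poch_neg_nat]
    have hsplit : poch (2 * a - j) (2 * n + 1)
        = poch (2 * a - j) k * poch (2 * a - j + k) (2 * n + 1 - k) := by
      have := poch_add (2 * a - j) k (2 * n + 1 - k)
      rwa [show k + (2 * n + 1 - k) = 2 * n + 1 by omega] at this
    have hdf : (((2 * n + 1).descFactorial k : ℕ) : ℂ)
        = (k.factorial : ℂ) * ((2 * n + 1).choose k : ℂ) := by
      exact_mod_cast congrArg (Nat.cast : ℕ → ℂ)
        (Nat.descFactorial_eq_factorial_mul_choose (2 * n + 1) k)
    rw [hneg, div_mul_eq_mul_div, div_eq_iff (mul_ne_zero hpk hfac), hsplit, hdf,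
      show ((-2 : ℂ)) = (-1) * 2 by norm_num, mul_pow]
    ring
  have hmin : ∑ r ∈ range (min (j / 2) n + 1),
        (-1 : ℂ) ^ r * (j.choose (2 * r + 1) : ℂ) * poch (-(n : ℂ)) r * poch a (n - r)
      = ∑ r ∈ range (n + 1),
          (-1 : ℂ) ^ r * (j.choose (2 * r + 1) : ℂ) * poch (-(n : ℂ)) r * poch a (n - r) := by
    refine Finset.sum_subset (Finset.range_subset_range.mpr (by omega)) fun r hr hr' => ?_
    have h1 := Finset.mem_range.mp hr
    have h2 : ¬ r < min (j / 2) n + 1 := fun hc => hr' (Finset.mem_range.mpr hc)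
    have h3 : j.choose (2 * r + 1) = 0 := Nat.choose_eq_zero_of_lt (by omega)
    rw [h3]
    simp
  have hO : (∑ r ∈ range (n + 1),
        (-1 : ℂ) ^ r * (j.choose (2 * r + 1) : ℂ) * poch (-(n : ℂ)) r * poch a (n - r))
      = ∑ r ∈ range (n + 1),
          (j.choose (2 * r + 1) : ℂ) * (n.descFactorial r : ℂ) * poch a (n - r) := by
    refine Finset.sum_congr rfl fun r hr => ?_
    rw [poch_neg_nat]
    have h2 : (-1 : ℂ) ^ r * (-1 : ℂ) ^ r = 1 := by
      rw [← pow_add]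
      exact Even.neg_one_pow ⟨r, rfl⟩
    linear_combination ((j.choose (2 * r + 1) : ℂ) * (n.descFactorial r : ℂ) * poch a (n - r)) * h2
  rw [hL, hmin, hO, (Gval n a j).2, Oo]
  ring
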